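/- Let n ≥ 1, let A ∈ M_n(ℂ) be upper triangular, let S ∈ M_n(ℂ) be Hermitian and upper triangular (hence diagonal with real entries) with Re(A) ≤ S, and let B ∈ M_n(ℂ) be strictly upper triangular with ‖B‖ ≤ 1. Then |Tr(A B*)| ≤ 2·(Tr(S) − Re(Tr(A))). -/

import Mathlib

open Matrix
open scoped Matrix.Norms.L2Operator ComplexOrder

set_option maxHeartbeats 1000000 in
lemma psd_trace_mul_bound {n : ℕ} {M : Matrix (Fin n) (Fin n) ℂ}
    (hM : M.PosSemidef) (X : Matrix (Fin n) (Fin n) ℂ) :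
    ‖(M * X).trace‖ ≤ ‖X‖ * M.trace.re := by
  classical
  obtain ⟨C, hCh, hCC⟩ : ∃ C : Matrix (Fin n) (Fin n) ℂ, Cᴴ = C ∧ C * C = M := by
    open scoped MatrixOrder in
    exact ⟨CFC.sqrt M, (CFC.sqrt_nonneg M).posSemidef.isHermitian,
      CFC.sqrt_mul_sqrt_self M hM.nonneg⟩
  have hconj : ∀ i j, (starRingEnd ℂ) (C j i) = C i j := by
    intro i j
    have := congrFun (congrFun hCh i) j
    simpa [Matrix.conjTranspose_apply] using this
  set v : Fin n → EuclideanSpace ℂ (Fin n) := fun i => (WithLp.equiv 2 _).symm (fun j => C j i) with hv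
  have hdiag : ∀ i, (C * X * C) i i
      = inner (𝕜 := ℂ) (v i) ((EuclideanSpace.equiv (Fin n) ℂ).symm (X *ᵥ (v i))) := by
    intro i
    have h1 : ∀ x, (starRingEnd ℂ) (C x i) * ∑ j, X x j * C j i
        = ∑ j, C i x * X x j * C j i := by
      intro x
      rw [hconj, Finset.mul_sum]
      exact Finset.sum_congr rfl fun j _ => by ring
    rw [PiLp.inner_apply]
    simp only [RCLike.inner_apply']
    show ∑ x, (∑ j, C i j * X j x) * C x i
        = ∑ x, (starRingEnd ℂ) (C x i) * ∑ j, X x j * C j i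
    simp only [h1, Finset.sum_mul]
    rw [Finset.sum_comm]
  have hinner_self : ∀ i, inner (𝕜 := ℂ) (v i) (v i) = M i i := by
    intro i
    rw [← hCC]
    rw [PiLp.inner_apply]
    simp only [RCLike.inner_apply']
    show ∑ j, (starRingEnd ℂ) (C j i) * C j i = ∑ j, C i j * C j i
    exact Finset.sum_congr rfl fun j _ => by rw [hconj]
  have hterm : ∀ i, ‖(C * X * C) i i‖ ≤ ‖X‖ * (M i i).re := by
    intro i
    have hsq : ‖v i‖ * ‖v i‖ = (M i i).re := by
      have h := @inner_self_eq_norm_mul_norm ℂ _ _ _ _ (v i)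
      rw [hinner_self i] at h
      rw [← h]
      rfl
    rw [hdiag i]
    calc ‖inner (𝕜 := ℂ) (v i) ((EuclideanSpace.equiv (Fin n) ℂ).symm (X *ᵥ (v i)))‖
        ≤ ‖v i‖ * ‖(EuclideanSpace.equiv (Fin n) ℂ).symm (X *ᵥ (v i))‖ := by
          exact norm_inner_le_norm _ _
      _ ≤ ‖v i‖ * (‖X‖ * ‖v i‖) :=
          mul_le_mul_of_nonneg_left (X.l2_opNorm_mulVec (v i)) (norm_nonneg _)
      _ = ‖X‖ * (‖v i‖ * ‖v i‖) := by ring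
      _ = ‖X‖ * (M i i).re := by rw [hsq]
  calc ‖(M * X).trace‖ = ‖(C * X * C).trace‖ := by
        rw [← hCC, Matrix.mul_assoc, Matrix.trace_mul_comm, Matrix.mul_assoc]
    _ ≤ ∑ i, ‖(C * X * C) i i‖ := by
        rw [Matrix.trace]
        exact norm_sum_le _ _
    _ ≤ ∑ i, ‖X‖ * (M i i).re := Finset.sum_le_sum fun i _ => hterm i
    _ = ‖X‖ * M.trace.re := by
        rw [Matrix.trace, Complex.re_sum, Finset.mul_sum]
        rfl


/-- The key coefficient estimate for Bohr's inequality on `n × n` upper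
triangular matrices: `|Tr(A Bᴴ)| ≤ 2 (Tr S − Re Tr A)`. -/
theorem bohr_coefficient_estimate {n : ℕ} (hn : 1 ≤ n)
    (A S B : Matrix (Fin n) (Fin n) ℂ)
    (hA_ut : ∀ i j : Fin n, j < i → A i j = 0)
    (hS_herm : S.IsHermitian)
    (hS_ut : ∀ i j : Fin n, j < i → S i j = 0)
    (hAS : (S - (2 : ℂ)⁻¹ • (A + Aᴴ)).PosSemidef)
    (hB_sut : ∀ i j : Fin n, j ≤ i → B i j = 0)
    (hB_norm : ‖B‖ ≤ 1) :
    ‖(A * Bᴴ).trace‖ ≤ 2 * (S.trace.re - A.trace.re) := by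
  classical
  set M : Matrix (Fin n) (Fin n) ℂ := S - (2 : ℂ)⁻¹ • (A + Aᴴ) with hMdef
  have hSB : (S * Bᴴ).trace = 0 := by
    rw [Matrix.trace]
    refine Finset.sum_eq_zero fun i _ => ?_
    rw [Matrix.diag_apply, Matrix.mul_apply]
    refine Finset.sum_eq_zero fun j _ => ?_
    rcases lt_trichotomy i j with h | h | h
    · have hS' : S i j = 0 := by
        have := congrFun (congrFun hS_herm i) j
        simp only [Matrix.conjTranspose_apply] at this
        rw [← this, hS_ut j i h, star_zero]
      rw [hS', zero_mul]
    · subst h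
      simp [Matrix.conjTranspose_apply, hB_sut i i le_rfl]
    · rw [hS_ut i j h, zero_mul]
  have hAB : (Aᴴ * Bᴴ).trace = 0 := by
    rw [Matrix.trace]
    refine Finset.sum_eq_zero fun i _ => ?_
    rw [Matrix.diag_apply, Matrix.mul_apply]
    refine Finset.sum_eq_zero fun j _ => ?_
    rcases le_or_gt j i with h | h
    · simp [Matrix.conjTranspose_apply, hB_sut i j h]
    · simp [Matrix.conjTranspose_apply, hA_ut j i h]
  have hMB : (M * Bᴴ).trace = -(2 : ℂ)⁻¹ * (A * Bᴴ).trace := by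
    rw [hMdef, Matrix.sub_mul, Matrix.smul_mul, Matrix.add_mul, Matrix.trace_sub,
      Matrix.trace_smul, Matrix.trace_add, hSB, hAB, smul_eq_mul]
    ring
  have habs : ‖(A * Bᴴ).trace‖ = 2 * ‖(M * Bᴴ).trace‖ := by
    rw [hMB, norm_mul]
    have : ‖(-(2 : ℂ)⁻¹)‖ = 2⁻¹ := by
      simp
    rw [this]
    ring
  have htr : M.trace.re = S.trace.re - A.trace.re := by
    rw [hMdef, Matrix.trace_sub, Matrix.trace_smul, Matrix.trace_add,
      Matrix.trace_conjTranspose, smul_eq_mul]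
    simp [Complex.sub_re, Complex.mul_re, Complex.add_re, Complex.conj_re, Complex.conj_im]
    ring
  have htr_nonneg : 0 ≤ M.trace.re := by
    rw [Matrix.trace, Complex.re_sum]
    refine Finset.sum_nonneg fun i _ => ?_
    have h := hAS.re_dotProduct_nonneg (Pi.single i 1)
    simpa [dotProduct, Matrix.mulVec, Pi.single_apply, Finset.sum_ite_eq,
      Finset.sum_ite_eq'] using h
  have hBH : ‖(Bᴴ : Matrix (Fin n) (Fin n) ℂ)‖ ≤ 1 := by
    rw [Matrix.l2_opNorm_conjTranspose]
    exact hB_norm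
  calc ‖(A * Bᴴ).trace‖ = 2 * ‖(M * Bᴴ).trace‖ := habs
    _ ≤ 2 * (‖(Bᴴ : Matrix (Fin n) (Fin n) ℂ)‖ * M.trace.re) := by
        have := psd_trace_mul_bound hAS (Bᴴ)
        linarith
    _ ≤ 2 * (1 * M.trace.re) := by
        have := mul_le_mul_of_nonneg_right hBH htr_nonneg
        linarith
    _ = 2 * (S.trace.re - A.trace.re) := by rw [one_mul, htr]
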